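/- Suppose X satisfies the sparse Riesz condition of order J with upper bound c₊(J), i.e., ‖X_A u‖₂² ≤ n c₊(J)‖u‖₂² whenever |A| ≤ J. Then for every β ∈ ℝᵖ, ‖Xβ‖₂ ≤ √(n c₊(J)) (‖β‖₂ + ‖β‖₁/√J). -/

import Mathlib

open Matrix Finset

/-- Cauchy–Schwarz in sqrt form. -/
lemma cs_sqrt {ι : Type*} (s : Finset ι) (f g : ι → ℝ) :
    ∑ i ∈ s, f i * g i ≤
      Real.sqrt (∑ i ∈ s, f i ^ 2) * Real.sqrt (∑ i ∈ s, g i ^ 2) := by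
  calc ∑ i ∈ s, f i * g i ≤ |∑ i ∈ s, f i * g i| := le_abs_self _
    _ = Real.sqrt ((∑ i ∈ s, f i * g i) ^ 2) := (Real.sqrt_sq_eq_abs _).symm
    _ ≤ Real.sqrt ((∑ i ∈ s, f i ^ 2) * ∑ i ∈ s, g i ^ 2) :=
        Real.sqrt_le_sqrt (sum_mul_sq_le_sq_mul_sq s f g)
    _ = _ := Real.sqrt_mul (Finset.sum_nonneg fun i _ => sq_nonneg _) _

/-- Triangle inequality for the `√(∑ ·²)` "norm". -/
lemma sqrt_sum_sq_add {ι : Type*} [Fintype ι] (f g : ι → ℝ) :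
    Real.sqrt (∑ i, (f i + g i) ^ 2) ≤
      Real.sqrt (∑ i, f i ^ 2) + Real.sqrt (∑ i, g i ^ 2) := by
  set A := ∑ i, f i ^ 2 with hA
  set B := ∑ i, g i ^ 2 with hB
  have hA0 : 0 ≤ A := Finset.sum_nonneg fun i _ => sq_nonneg _
  have hB0 : 0 ≤ B := Finset.sum_nonneg fun i _ => sq_nonneg _
  have key : ∑ i, (f i + g i) ^ 2 ≤ (Real.sqrt A + Real.sqrt B) ^ 2 := by
    have hcs := cs_sqrt (Finset.univ : Finset ι) f g
    have expand : ∑ i, (f i + g i) ^ 2 = A + 2 * ∑ i, f i * g i + B := by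
      rw [hA, hB]
      simp_rw [add_sq, mul_assoc]
      rw [Finset.sum_add_distrib, Finset.sum_add_distrib, ← Finset.mul_sum]
    rw [expand, add_sq, Real.sq_sqrt hA0, Real.sq_sqrt hB0]
    nlinarith [hcs]
  calc Real.sqrt (∑ i, (f i + g i) ^ 2)
      ≤ Real.sqrt ((Real.sqrt A + Real.sqrt B) ^ 2) := Real.sqrt_le_sqrt key
    _ = Real.sqrt A + Real.sqrt B := Real.sqrt_sq (by positivity)

/-- Existence of a top-`J` subset. -/
lemma exists_topJ {α : Type*} [DecidableEq α] (f : α → ℝ) :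
    ∀ (J : ℕ) (s : Finset α), J ≤ s.card →
      ∃ A ⊆ s, A.card = J ∧ ∀ i ∈ A, ∀ j ∈ s, j ∉ A → f j ≤ f i := by
  intro J
  induction J with
  | zero => intro s _; exact ⟨∅, Finset.empty_subset s, rfl, by simp⟩
  | succ J ih =>
      intro s hJs
      obtain ⟨A, hAs, hcard, hmax⟩ := ih s (Nat.le_of_succ_le hJs)
      have hne : (s \ A).Nonempty := by
        rw [← Finset.card_pos, Finset.card_sdiff_of_subset hAs]; omega
      obtain ⟨i, hi, himax⟩ := Finset.exists_max_image (s \ A) f hne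
      have hiA : i ∉ A := (Finset.mem_sdiff.mp hi).2
      have his : i ∈ s := (Finset.mem_sdiff.mp hi).1
      refine ⟨insert i A, Finset.insert_subset his hAs, ?_, ?_⟩
      · rw [Finset.card_insert_of_notMem hiA, hcard]
      · intro i' hi' j hj hjA
        have hjA' : j ∉ A := fun h => hjA (Finset.mem_insert_of_mem h)
        rcases Finset.mem_insert.mp hi' with h | h
        · subst h; exact himax j (Finset.mem_sdiff.mpr ⟨hj, hjA'⟩)
        · exact hmax i' h j hj hjA'

/-- SRC bound in sqrt form. -/
lemma src_sqrt_bound {n p : ℕ} (X : Matrix (Fin n) (Fin p) ℝ) (J : ℕ) (cplus : ℝ)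
    (hSRC : ∀ A : Finset (Fin p), A.card ≤ J → ∀ u : Fin p → ℝ,
      (∀ i ∉ A, u i = 0) →
      ∑ i, (X.mulVec u i) ^ 2 ≤ (n : ℝ) * cplus * ∑ i, u i ^ 2)
    (A : Finset (Fin p)) (hA : A.card ≤ J) (u : Fin p → ℝ) (hu : ∀ i ∉ A, u i = 0) :
    Real.sqrt (∑ i, (X.mulVec u i) ^ 2)
      ≤ Real.sqrt ((n : ℝ) * cplus) * Real.sqrt (∑ i, u i ^ 2) := by
  have h := hSRC A hA u hu
  by_cases hnc : 0 ≤ (n : ℝ) * cplus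
  · calc Real.sqrt (∑ i, (X.mulVec u i) ^ 2)
        ≤ Real.sqrt ((n : ℝ) * cplus * ∑ i, u i ^ 2) := Real.sqrt_le_sqrt h
      _ = _ := Real.sqrt_mul hnc _
  · push_neg at hnc
    have h0 : (0:ℝ) ≤ ∑ i, (X.mulVec u i) ^ 2 := Finset.sum_nonneg fun i _ => sq_nonneg _
    have h1 : (0:ℝ) ≤ ∑ i, u i ^ 2 := Finset.sum_nonneg fun i _ => sq_nonneg _
    have hle : ∑ i, u i ^ 2 ≤ 0 := by nlinarith
    have hz : ∑ i, u i ^ 2 = 0 := le_antisymm hle h1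
    have hu0 : u = 0 := by
      funext i
      have := (Finset.sum_eq_zero_iff_of_nonneg
        (fun i _ => sq_nonneg (u i))).mp hz i (Finset.mem_univ i)
      exact pow_eq_zero_iff (by norm_num) |>.mp this
    subst hu0
    simp [Matrix.mulVec_zero, Real.sqrt_zero]

/-- One shelling step: peel off the top-`J` coordinates. -/
lemma shell_step {n p : ℕ} (X : Matrix (Fin n) (Fin p) ℝ) (J : ℕ) (hJ : 0 < J)
    (β : Fin p → ℝ)
    (hbig : J ≤ ((Finset.univ.filter fun i => β i ≠ 0)).card) :
    ∃ (A : Finset (Fin p)) (β₁ β₂ : Fin p → ℝ) (t' : ℝ),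
      A.card = J ∧ 0 ≤ t' ∧
      β₁ = (fun i => if i ∈ A then β i else 0) ∧
      (∀ i ∉ A, β₁ i = 0) ∧
      ((Finset.univ.filter fun i => β₂ i ≠ 0)).card
        = ((Finset.univ.filter fun i => β i ≠ 0)).card - J ∧
      (∀ i, |β₂ i| ≤ t') ∧
      Real.sqrt (∑ i, (X.mulVec β i) ^ 2)
        ≤ Real.sqrt (∑ i, (X.mulVec β₁ i) ^ 2)
          + Real.sqrt (∑ i, (X.mulVec β₂ i) ^ 2) ∧
      Real.sqrt (J : ℝ) * t' ≤ (∑ i, |β₁ i|) / Real.sqrt (J : ℝ) ∧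
      (∑ i, |β₁ i|) + (∑ i, |β₂ i|) = ∑ i, |β i| ∧
      (∑ i, β₁ i ^ 2) ≤ ∑ i, β i ^ 2 := by
  set s : Finset (Fin p) := Finset.univ.filter fun i => β i ≠ 0 with hs
  obtain ⟨A, hAs, hAcard, htop⟩ := exists_topJ (fun i => |β i|) J s hbig
  have hAne : A.Nonempty := Finset.card_pos.mp (by omega)
  obtain ⟨i₀, hi₀A, hmin⟩ := Finset.exists_min_image A (fun i => |β i|) hAne
  set t' : ℝ := |β i₀| with ht'
  set β₁ : Fin p → ℝ := fun i => if i ∈ A then β i else 0 with hβ₁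
  set β₂ : Fin p → ℝ := fun i => if i ∈ A then 0 else β i with hβ₂
  have ht'0 : 0 ≤ t' := abs_nonneg _
  have hsupp₁ : ∀ i ∉ A, β₁ i = 0 := by intro i hi; simp [hβ₁, hi]
  have hsupp₂ : (Finset.univ.filter fun i => β₂ i ≠ 0) = s \ A := by
    ext i
    by_cases h : i ∈ A
    · simp [hβ₂, h]
    · by_cases hz : β i = 0 <;> simp [hβ₂, h, hs, hz]
  have hcard₂ : ((Finset.univ.filter fun i => β₂ i ≠ 0)).card = s.card - J := by
    rw [hsupp₂, Finset.card_sdiff_of_subset hAs, hAcard]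
  have habs₂ : ∀ i, |β₂ i| ≤ t' := by
    intro i
    by_cases h : i ∈ A
    · simp [hβ₂, h, ht'0]
    · by_cases hz : β i = 0
      · simp [hβ₂, h, hz, ht'0]
      · have his : i ∈ s := by simp [hs, hz]
        have := htop i₀ hi₀A i his h
        simpa [hβ₂, h, ht'] using this
  have hsplit : β = β₁ + β₂ := by
    funext i; by_cases h : i ∈ A <;> simp [hβ₁, hβ₂, h]
  have htri : Real.sqrt (∑ i, (X.mulVec β i) ^ 2)
      ≤ Real.sqrt (∑ i, (X.mulVec β₁ i) ^ 2) + Real.sqrt (∑ i, (X.mulVec β₂ i) ^ 2) := by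
    have hX : X.mulVec β = X.mulVec β₁ + X.mulVec β₂ := by
      rw [hsplit, Matrix.mulVec_add]
    simp only [hX, Pi.add_apply]
    exact sqrt_sum_sq_add _ _
  have hsum₁ : (∑ i, |β₁ i|) = ∑ i ∈ A, |β i| := by
    rw [hβ₁]
    rw [show (∑ i, |if i ∈ A then β i else 0|) = ∑ i, if i ∈ A then |β i| else 0 by
      apply Finset.sum_congr rfl; intro i _; split_ifs <;> simp]
    rw [Finset.sum_ite_mem, Finset.univ_inter]
  have hsqJ : (0:ℝ) < Real.sqrt (J : ℝ) := Real.sqrt_pos.mpr (by exact_mod_cast hJ)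
  have h3 : Real.sqrt (J : ℝ) * t' ≤ (∑ i, |β₁ i|) / Real.sqrt (J : ℝ) := by
    rw [le_div_iff₀ hsqJ]
    have heq : Real.sqrt (J : ℝ) * t' * Real.sqrt (J : ℝ) = (J : ℝ) * t' := by
      rw [mul_comm (Real.sqrt (J : ℝ)) t', mul_assoc,
        Real.mul_self_sqrt (by positivity)]
      ring
    rw [heq, hsum₁]
    calc (J : ℝ) * t' = ∑ _i ∈ A, t' := by
          rw [Finset.sum_const, nsmul_eq_mul, hAcard]
      _ ≤ ∑ i ∈ A, |β i| := Finset.sum_le_sum fun i hi => hmin i hi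
  have h4 : (∑ i, |β₁ i|) + (∑ i, |β₂ i|) = ∑ i, |β i| := by
    rw [← Finset.sum_add_distrib]
    apply Finset.sum_congr rfl
    intro i _
    by_cases h : i ∈ A <;> simp [hβ₁, hβ₂, h]
  have h5 : (∑ i, β₁ i ^ 2) ≤ ∑ i, β i ^ 2 := by
    apply Finset.sum_le_sum
    intro i _
    by_cases h : i ∈ A <;> simp [hβ₁, h] <;> positivity
  exact ⟨A, β₁, β₂, t', hAcard, ht'0, rfl, hsupp₁, hcard₂, habs₂, htri, h3, h4, h5⟩

/-- Base case: small support. -/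
lemma src_base {n p : ℕ} (X : Matrix (Fin n) (Fin p) ℝ) (J : ℕ) (hJ : 0 < J) (cplus : ℝ)
    (hSRC : ∀ A : Finset (Fin p), A.card ≤ J → ∀ u : Fin p → ℝ,
      (∀ i ∉ A, u i = 0) →
      ∑ i, (X.mulVec u i) ^ 2 ≤ (n : ℝ) * cplus * ∑ i, u i ^ 2)
    (β : Fin p → ℝ) (t : ℝ) (ht : 0 ≤ t)
    (hcard : ((Finset.univ.filter fun i => β i ≠ 0)).card ≤ J)
    (habs : ∀ i, |β i| ≤ t) :
    Real.sqrt (∑ i, (X.mulVec β i) ^ 2)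
      ≤ Real.sqrt ((n : ℝ) * cplus) *
          (Real.sqrt (J : ℝ) * t + (∑ i, |β i|) / Real.sqrt (J : ℝ)) := by
  have h1 := src_sqrt_bound X J cplus hSRC _ hcard β
    (fun i hi => by simpa using hi)
  have h2 : (∑ i, β i ^ 2) ≤ (J : ℝ) * t ^ 2 := by
    calc (∑ i, β i ^ 2) ≤ ∑ i, (if β i ≠ 0 then t ^ 2 else 0) := by
          apply Finset.sum_le_sum
          intro i _
          by_cases h : β i = 0
          · simp [h]
          · simp only [h, if_pos, ne_eq, not_false_iff]
            have := abs_le.mp (habs i)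
            exact sq_le_sq' (by linarith [this.1]) this.2
      _ = ∑ i ∈ Finset.univ.filter fun i => β i ≠ 0, t ^ 2 :=
          (Finset.sum_filter _ _).symm
      _ = ((Finset.univ.filter fun i => β i ≠ 0)).card * t ^ 2 := by
          rw [Finset.sum_const, nsmul_eq_mul]
      _ ≤ (J : ℝ) * t ^ 2 := by
          apply mul_le_mul_of_nonneg_right _ (sq_nonneg t)
          exact_mod_cast hcard
  have h2' : Real.sqrt (∑ i, β i ^ 2) ≤ Real.sqrt (J : ℝ) * t := by
    calc Real.sqrt (∑ i, β i ^ 2) ≤ Real.sqrt ((J : ℝ) * t ^ 2) := Real.sqrt_le_sqrt h2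
      _ = Real.sqrt (J : ℝ) * t := by
          rw [Real.sqrt_mul (by positivity), Real.sqrt_sq ht]
  have hnn : 0 ≤ (∑ i, |β i|) / Real.sqrt (J : ℝ) :=
    div_nonneg (Finset.sum_nonneg fun i _ => abs_nonneg _) (Real.sqrt_nonneg _)
  calc Real.sqrt (∑ i, (X.mulVec β i) ^ 2)
      ≤ Real.sqrt ((n : ℝ) * cplus) * Real.sqrt (∑ i, β i ^ 2) := h1
    _ ≤ Real.sqrt ((n : ℝ) * cplus) * (Real.sqrt (J : ℝ) * t) :=
        mul_le_mul_of_nonneg_left h2' (Real.sqrt_nonneg _)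
    _ ≤ Real.sqrt ((n : ℝ) * cplus) *
          (Real.sqrt (J : ℝ) * t + (∑ i, |β i|) / Real.sqrt (J : ℝ)) :=
        mul_le_mul_of_nonneg_left (le_add_of_nonneg_right hnn) (Real.sqrt_nonneg _)

/-- Shelling induction. -/
lemma src_shelling {n p : ℕ} (X : Matrix (Fin n) (Fin p) ℝ) (J : ℕ) (hJ : 0 < J) (cplus : ℝ)
    (hSRC : ∀ A : Finset (Fin p), A.card ≤ J → ∀ u : Fin p → ℝ,
      (∀ i ∉ A, u i = 0) →
      ∑ i, (X.mulVec u i) ^ 2 ≤ (n : ℝ) * cplus * ∑ i, u i ^ 2) :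
    ∀ (m : ℕ) (β : Fin p → ℝ) (t : ℝ), 0 ≤ t →
      ((Finset.univ.filter fun i => β i ≠ 0)).card ≤ m →
      (∀ i, |β i| ≤ t) →
      Real.sqrt (∑ i, (X.mulVec β i) ^ 2)
        ≤ Real.sqrt ((n : ℝ) * cplus) *
            (Real.sqrt (J : ℝ) * t + (∑ i, |β i|) / Real.sqrt (J : ℝ)) := by
  intro m
  induction m with
  | zero =>
      intro β t ht hcard habs
      exact src_base X J hJ cplus hSRC β t ht (by omega) habs
  | succ m ih =>
      intro β t ht hcard habs
      by_cases hsmall : ((Finset.univ.filter fun i => β i ≠ 0)).card ≤ J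
      · exact src_base X J hJ cplus hSRC β t ht hsmall habs
      · push_neg at hsmall
        obtain ⟨A, β₁, β₂, t', hAcard, ht'0, hβ₁def, hsupp₁, hcard₂, habs₂, htri, h3, h4, _⟩ :=
          shell_step X J hJ β hsmall.le
        have hIH := ih β₂ t' ht'0 (by omega) habs₂
        have hsum₁ : (∑ i, β₁ i ^ 2) ≤ (J : ℝ) * t ^ 2 := by
          rw [hβ₁def]
          calc (∑ i, (if i ∈ A then β i else 0) ^ 2)
              ≤ ∑ i, (if i ∈ A then t ^ 2 else 0) := by
                apply Finset.sum_le_sum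
                intro i _
                split_ifs with h
                · have := abs_le.mp (habs i)
                  exact sq_le_sq' (by linarith [this.1]) this.2
                · simp
            _ = ∑ _i ∈ A, t ^ 2 := by rw [Finset.sum_ite_mem, Finset.univ_inter]
            _ = (J : ℝ) * t ^ 2 := by rw [Finset.sum_const, nsmul_eq_mul, hAcard]
        have h1 : Real.sqrt (∑ i, (X.mulVec β₁ i) ^ 2)
            ≤ Real.sqrt ((n : ℝ) * cplus) * (Real.sqrt (J : ℝ) * t) := by
          calc Real.sqrt (∑ i, (X.mulVec β₁ i) ^ 2)
              ≤ Real.sqrt ((n : ℝ) * cplus) * Real.sqrt (∑ i, β₁ i ^ 2) :=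
                src_sqrt_bound X J cplus hSRC A (le_of_eq hAcard) β₁ hsupp₁
            _ ≤ Real.sqrt ((n : ℝ) * cplus) * (Real.sqrt (J : ℝ) * t) := by
                apply mul_le_mul_of_nonneg_left _ (Real.sqrt_nonneg _)
                calc Real.sqrt (∑ i, β₁ i ^ 2) ≤ Real.sqrt ((J : ℝ) * t ^ 2) :=
                      Real.sqrt_le_sqrt hsum₁
                  _ = Real.sqrt (J : ℝ) * t := by
                      rw [Real.sqrt_mul (by positivity), Real.sqrt_sq ht]
        calc Real.sqrt (∑ i, (X.mulVec β i) ^ 2)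
            ≤ Real.sqrt (∑ i, (X.mulVec β₁ i) ^ 2)
              + Real.sqrt (∑ i, (X.mulVec β₂ i) ^ 2) := htri
          _ ≤ Real.sqrt ((n : ℝ) * cplus) * (Real.sqrt (J : ℝ) * t)
              + Real.sqrt ((n : ℝ) * cplus)
                * (Real.sqrt (J : ℝ) * t' + (∑ i, |β₂ i|) / Real.sqrt (J : ℝ)) :=
              add_le_add h1 hIH
          _ ≤ Real.sqrt ((n : ℝ) * cplus) * (Real.sqrt (J : ℝ) * t)
              + Real.sqrt ((n : ℝ) * cplus)
                * ((∑ i, |β₁ i|) / Real.sqrt (J : ℝ) + (∑ i, |β₂ i|) / Real.sqrt (J : ℝ)) := by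
              apply add_le_add_right
              exact mul_le_mul_of_nonneg_left (add_le_add_left h3 _) (Real.sqrt_nonneg _)
          _ = Real.sqrt ((n : ℝ) * cplus) *
                (Real.sqrt (J : ℝ) * t + (∑ i, |β i|) / Real.sqrt (J : ℝ)) := by
              rw [← h4, add_div]; ring

/-- Under the SRC upper bound of order `J`,
`‖Xβ‖₂ ≤ √(n c₊(J)) (‖β‖₂ + ‖β‖₁/√J)` for every `β`. -/
theorem src_full_vector_upper_bound {n p : ℕ} (hn : 0 < n)
    (X : Matrix (Fin n) (Fin p) ℝ) (J : ℕ) (hJ : 0 < J) (cplus : ℝ)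
    (hSRC : ∀ A : Finset (Fin p), A.card ≤ J → ∀ u : Fin p → ℝ,
      (∀ i ∉ A, u i = 0) →
      ∑ i, (X.mulVec u i) ^ 2 ≤ (n : ℝ) * cplus * ∑ i, u i ^ 2) :
    ∀ β : Fin p → ℝ,
      Real.sqrt (∑ i, (X.mulVec β i) ^ 2)
        ≤ Real.sqrt ((n : ℝ) * cplus) *
            (Real.sqrt (∑ i, β i ^ 2) + (∑ i, |β i|) / Real.sqrt (J : ℝ)) := by
  intro β
  have hnn : 0 ≤ (∑ i, |β i|) / Real.sqrt (J : ℝ) :=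
    div_nonneg (Finset.sum_nonneg fun i _ => abs_nonneg _) (Real.sqrt_nonneg _)
  by_cases hsmall : ((Finset.univ.filter fun i => β i ≠ 0)).card ≤ J
  · calc Real.sqrt (∑ i, (X.mulVec β i) ^ 2)
        ≤ Real.sqrt ((n : ℝ) * cplus) * Real.sqrt (∑ i, β i ^ 2) :=
          src_sqrt_bound X J cplus hSRC _ hsmall β (fun i hi => by simpa using hi)
      _ ≤ Real.sqrt ((n : ℝ) * cplus) *
            (Real.sqrt (∑ i, β i ^ 2) + (∑ i, |β i|) / Real.sqrt (J : ℝ)) :=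
          mul_le_mul_of_nonneg_left (le_add_of_nonneg_right hnn) (Real.sqrt_nonneg _)
  · push_neg at hsmall
    obtain ⟨A, β₁, β₂, t', hAcard, ht'0, hβ₁def, hsupp₁, hcard₂, habs₂, htri, h3, h4, h5⟩ :=
      shell_step X J hJ β hsmall.le
    have hIH := src_shelling X J hJ cplus hSRC
      ((Finset.univ.filter fun i => β₂ i ≠ 0)).card β₂ t' ht'0 le_rfl habs₂
    have h1 : Real.sqrt (∑ i, (X.mulVec β₁ i) ^ 2)
        ≤ Real.sqrt ((n : ℝ) * cplus) * Real.sqrt (∑ i, β i ^ 2) := by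
      calc Real.sqrt (∑ i, (X.mulVec β₁ i) ^ 2)
          ≤ Real.sqrt ((n : ℝ) * cplus) * Real.sqrt (∑ i, β₁ i ^ 2) :=
            src_sqrt_bound X J cplus hSRC A (le_of_eq hAcard) β₁ hsupp₁
        _ ≤ Real.sqrt ((n : ℝ) * cplus) * Real.sqrt (∑ i, β i ^ 2) :=
            mul_le_mul_of_nonneg_left (Real.sqrt_le_sqrt h5) (Real.sqrt_nonneg _)
    calc Real.sqrt (∑ i, (X.mulVec β i) ^ 2)
        ≤ Real.sqrt (∑ i, (X.mulVec β₁ i) ^ 2)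
          + Real.sqrt (∑ i, (X.mulVec β₂ i) ^ 2) := htri
      _ ≤ Real.sqrt ((n : ℝ) * cplus) * Real.sqrt (∑ i, β i ^ 2)
          + Real.sqrt ((n : ℝ) * cplus)
            * (Real.sqrt (J : ℝ) * t' + (∑ i, |β₂ i|) / Real.sqrt (J : ℝ)) :=
          add_le_add h1 hIH
      _ ≤ Real.sqrt ((n : ℝ) * cplus) * Real.sqrt (∑ i, β i ^ 2)
          + Real.sqrt ((n : ℝ) * cplus)
            * ((∑ i, |β₁ i|) / Real.sqrt (J : ℝ) + (∑ i, |β₂ i|) / Real.sqrt (J : ℝ)) := by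
          apply add_le_add_right
          exact mul_le_mul_of_nonneg_left (add_le_add_left h3 _) (Real.sqrt_nonneg _)
      _ = Real.sqrt ((n : ℝ) * cplus) *
            (Real.sqrt (∑ i, β i ^ 2) + (∑ i, |β i|) / Real.sqrt (J : ℝ)) := by
          rw [← h4, add_div]; ring
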